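/- Let R be a commutative integral domain of finite character and let k ≥ 2 be an integer. If I is a nonzero finitely generated ideal of R such that for every maximal ideal 𝔪 of R the ideal IR_𝔪 of R_𝔪 can be generated by at most k elements, then I can be generated by at most k elements. -/

import Mathlib

universe u
set_option linter.unusedSectionVars false
open Ideal


section aux

variable {R : Type u} [CommRing R] [IsDomain R]

/-- Global Nakayama: a nonzero f.g. ideal in a domain is not equal to `𝔪 * I`. -/
lemma stmt19_auxA {I 𝔪 : Ideal R} (hI0 : I ≠ ⊥) (hIfg : I.FG) (h𝔪 : 𝔪.IsMaximal) :
    ∃ w, w ∈ I ∧ w ∉ 𝔪 * I := by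
  by_contra h
  push_neg at h
  have hle : I ≤ 𝔪 • I := by
    intro x hx
    rw [Ideal.smul_eq_mul]
    exact h x hx
  obtain ⟨r, hr1, hr0⟩ :=
    Submodule.exists_sub_one_mem_and_smul_eq_zero_of_fg_of_le_smul 𝔪 I hIfg hle
  obtain ⟨x, hxI, hx0⟩ := Submodule.exists_mem_ne_zero_of_ne_bot hI0
  have hrx : r * x = 0 := by simpa using hr0 x hxI
  have hr : r = 0 := by
    rcases mul_eq_zero.1 hrx with h | h
    · exact h
    · exact absurd h hx0
  rw [hr] at hr1
  have : (1 : R) ∈ 𝔪 := by simpa using 𝔪.neg_mem hr1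
  exact h𝔪.ne_top (Ideal.eq_top_iff_one _ |>.2 this)

omit [IsDomain R] in
lemma stmt19_key_mem {I 𝔪 P : Ideal R} (h𝔪 : 𝔪.IsMaximal) {t q : R} (ht : t ∈ I)
    (hq : q ∉ 𝔪) (htq : t * q ∈ P) : t ∈ P ⊔ 𝔪 * I := by
  obtain ⟨y, i, hi, hyi⟩ := h𝔪.exists_inv hq
  have hteq : t = y * (t * q) + i * t := by linear_combination (-t) * hyi
  rw [hteq]
  exact add_mem (Ideal.mem_sup_left (P.mul_mem_left _ htq))
    (Ideal.mem_sup_right (Ideal.mul_mem_mul hi ht))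

/-- CRT modulo the ideals `𝔪 * I`. -/
lemma stmt19_crt (I : Ideal R) (T : Finset (MaximalSpectrum R)) (x : MaximalSpectrum R → R)
    (hx : ∀ 𝔪 ∈ T, x 𝔪 ∈ I) :
    ∃ b, b ∈ I ∧ ∀ 𝔪 ∈ T, b - x 𝔪 ∈ 𝔪.asIdeal * I := by
  classical
  induction T using Finset.induction_on with
  | empty => exact ⟨0, I.zero_mem, by simp⟩
  | @insert 𝔪 T' h𝔪T ih =>
    obtain ⟨b', hb'I, hb'⟩ := ih (fun n hn => hx n (Finset.mem_insert_of_mem hn))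
    have hx𝔪 : x 𝔪 ∈ I := hx 𝔪 (Finset.mem_insert_self _ _)
    set P : Ideal R := T'.inf (fun n => n.asIdeal) with hP
    have hPm : ¬ P ≤ 𝔪.asIdeal := by
      intro hle
      obtain ⟨n, hnT, hn⟩ := (Ideal.IsPrime.inf_le' 𝔪.2.isPrime).1 hle
      have : n = 𝔪 := MaximalSpectrum.ext (n.2.eq_of_le 𝔪.2.ne_top hn)
      exact h𝔪T (this ▸ hnT)
    have hsup : 𝔪.asIdeal ⊔ P = ⊤ := by
      by_contra hne
      exact hPm (le_sup_right.trans_eq (𝔪.2.eq_of_le hne le_sup_left).symm)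
    have h1 : (1 : R) ∈ 𝔪.asIdeal ⊔ P := hsup ▸ Submodule.mem_top
    obtain ⟨u, hu, v, hv, huv⟩ := Submodule.mem_sup.1 h1
    refine ⟨v * x 𝔪 + u * b', add_mem (I.mul_mem_left _ hx𝔪) (I.mul_mem_left _ hb'I), ?_⟩
    intro n hn
    rcases Finset.mem_insert.1 hn with rfl | hn'
    · have heq : v * x n + u * b' - x n = u * (b' - x n) := by
        linear_combination (x n) * huv
      rw [heq]
      exact Ideal.mul_mem_mul hu (sub_mem hb'I hx𝔪)
    · have heq : v * x 𝔪 + u * b' - x n = v * (x 𝔪 - b') + (b' - x n) := by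
        linear_combination (b') * huv
      rw [heq]
      exact add_mem (Ideal.mul_mem_mul ((Finset.inf_le hn' : P ≤ n.asIdeal) hv) (sub_mem hx𝔪 hb'I)) (hb' n hn')

end aux


section aux2

variable {R : Type u} [CommRing R] [IsDomain R]

/-- Exchange lemma: replace one generator by `a`. -/
lemma stmt19_exchange {I 𝔪 : Ideal R} (h𝔪 : 𝔪.IsMaximal) {X : Finset R}
    (hXI : ∀ x ∈ X, x ∈ I) (hspan : I ≤ span ↑X ⊔ 𝔪 * I) {a : R} (haI : a ∈ I)
    (ha : a ∉ 𝔪 * I) :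
    ∃ Y : Finset R, Y.card + 1 ≤ X.card ∧ (∀ y ∈ Y, y ∈ I) ∧
      I ≤ span (insert a ↑Y) ⊔ 𝔪 * I := by
  classical
  obtain ⟨y, hy, w, hw, hyw⟩ := Submodule.mem_sup.1 (hspan haI)
  obtain ⟨c, -, hc⟩ := Submodule.mem_span_finset.1 hy
  have hx₀ : ∃ x₀ ∈ X, c x₀ ∉ 𝔪 := by
    by_contra h
    push_neg at h
    apply ha
    have hy𝔪 : y ∈ 𝔪 * I := by
      rw [← hc]
      exact Submodule.sum_mem _ fun x hx => by
        simpa [smul_eq_mul] using Ideal.mul_mem_mul (h x hx) (hXI x hx)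
    rw [← hyw]
    exact add_mem hy𝔪 hw
  obtain ⟨x₀, hx₀X, hc₀⟩ := hx₀
  obtain ⟨z, i, hi, hzi⟩ := h𝔪.exists_inv hc₀
  refine ⟨X.erase x₀, ?_, fun x hx => hXI x (Finset.mem_of_mem_erase hx), ?_⟩
  · rw [Finset.card_erase_add_one hx₀X]
  · set Q : Ideal R := span (insert a ↑(X.erase x₀)) ⊔ 𝔪 * I with hQ
    have hsum : c x₀ * x₀ + ∑ x ∈ X.erase x₀, c x * x = y := by
      rw [← hc]
      simpa [smul_eq_mul] using Finset.add_sum_erase X (fun x => c x * x) hx₀X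
    have hx₀Q : x₀ ∈ Q := by
      have hx₀eq : x₀ = z * a - z * w - z * (∑ x ∈ X.erase x₀, c x * x) + i * x₀ := by
        linear_combination (-x₀) * hzi + z * hsum + z * hyw
      rw [hx₀eq]
      refine add_mem (sub_mem (sub_mem ?_ ?_) ?_) ?_
      · exact Ideal.mem_sup_left (Ideal.mul_mem_left _ _
          (subset_span (Set.mem_insert _ _)))
      · exact Ideal.mem_sup_right (Ideal.mul_mem_left _ _ hw)
      · refine Ideal.mem_sup_left (Ideal.mul_mem_left _ _ ?_)
        exact Submodule.sum_mem _ fun x hx => Ideal.mul_mem_left _ _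
          (subset_span (Set.mem_insert_of_mem _ hx))
      · exact Ideal.mem_sup_right (Ideal.mul_mem_mul hi (hXI x₀ hx₀X))
    have hXQ : span (↑X : Set R) ≤ Q := by
      rw [Ideal.span_le]
      intro x hxX
      by_cases hxx₀ : x = x₀
      · exact hxx₀ ▸ hx₀Q
      · exact Ideal.mem_sup_left (subset_span (Set.mem_insert_of_mem _
          (Finset.mem_erase.2 ⟨hxx₀, hxX⟩)))
    exact hspan.trans (sup_le hXQ le_sup_right)

/-- Clearing denominators: a `≤ k`-element generating set of the localization yields
`X ⊆ I` with `|X| ≤ k` and `I ≤ span X ⊔ 𝔪 I`. -/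
lemma stmt19_loc_clear {I 𝔪 : Ideal R} (h𝔪 : 𝔪.IsMaximal) {k : ℕ}
    (s : Finset (Localization.AtPrime 𝔪)) (hcard : s.card ≤ k)
    (hs : Ideal.map (algebraMap R (Localization.AtPrime 𝔪)) I = Ideal.span ↑s) :
    ∃ X : Finset R, X.card ≤ k ∧ (∀ x ∈ X, x ∈ I) ∧ I ≤ span ↑X ⊔ 𝔪 * I := by
  classical
  haveI : 𝔪.IsPrime := h𝔪.isPrime
  set φ := algebraMap R (Localization.AtPrime 𝔪) with hφ
  have hinj : Function.Injective φ :=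
    IsLocalization.injective (Localization.AtPrime 𝔪) 𝔪.primeCompl_le_nonZeroDivisors
  set Pr : Localization.AtPrime 𝔪 → Prop :=
    fun g => ∃ p : R × R, p.1 ∈ I ∧ p.2 ∈ 𝔪.primeCompl ∧ g * φ p.2 = φ p.1 with hPr
  have hP : ∀ g ∈ s, Pr g := by
    intro g hg
    have hgmem : g ∈ Ideal.map φ I := hs ▸ subset_span hg
    obtain ⟨⟨x, q⟩, hxq⟩ := (IsLocalization.mem_map_algebraMap_iff 𝔪.primeCompl _).1 hgmem
    exact ⟨(↑x, ↑q), x.2, q.2, hxq⟩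
  set f : Localization.AtPrime 𝔪 → R := fun g => if h : Pr g then h.choose.1 else 0 with hf
  set den : Localization.AtPrime 𝔪 → R := fun g => if h : Pr g then h.choose.2 else 1 with hden
  have hfprop : ∀ g ∈ s, f g ∈ I ∧ den g ∈ 𝔪.primeCompl ∧ g * φ (den g) = φ (f g) := by
    intro g hg
    have h := hP g hg
    simp only [hf, hden, dif_pos h]
    exact h.choose_spec
  set X : Finset R := s.image f with hX
  have hXI : ∀ x ∈ X, x ∈ I := by
    intro x hx
    obtain ⟨g, hg, rfl⟩ := Finset.mem_image.1 hx
    exact (hfprop g hg).1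
  have hmapeq : Ideal.map φ (span ↑X) = Ideal.map φ I := by
    rw [hs]
    apply le_antisymm
    · rw [Ideal.map_span, Ideal.span_le]
      rintro _ ⟨x, hx, rfl⟩
      rw [Finset.coe_image] at hx
      obtain ⟨g, hg, rfl⟩ := hx
      rw [← (hfprop g hg).2.2]
      exact Ideal.mul_mem_right _ _ (subset_span hg)
    · rw [Ideal.span_le]
      intro g hg
      obtain ⟨u, hu⟩ := IsLocalization.map_units (Localization.AtPrime 𝔪)
        (⟨den g, (hfprop g hg).2.1⟩ : 𝔪.primeCompl)
      have hgu : g * ↑u = φ (f g) := by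
        rw [hu]; exact (hfprop g hg).2.2
      have hginv : g = φ (f g) * ↑u⁻¹ := by
        rw [← hgu, mul_assoc, Units.mul_inv, mul_one]
      rw [hginv]
      exact Ideal.mul_mem_right _ _ (Ideal.mem_map_of_mem φ
        (subset_span (by exact_mod_cast Finset.mem_image_of_mem f hg)))
  refine ⟨X, le_trans (Finset.card_image_le) hcard, hXI, ?_⟩
  intro t ht
  have htmem : φ t ∈ Ideal.map φ (span (↑X : Set R)) := hmapeq ▸ Ideal.mem_map_of_mem φ ht
  obtain ⟨⟨y, q⟩, hyq⟩ := (IsLocalization.mem_map_algebraMap_iff 𝔪.primeCompl _).1 htmem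
  have htq : t * ↑q ∈ span (↑X : Set R) := by
    have : φ (t * ↑q) = φ ↑y := by rw [_root_.map_mul]; exact hyq
    have := hinj this
    rw [this]
    exact y.2
  exact stmt19_key_mem h𝔪 ht q.2 htq

end aux2
section cover

variable {R : Type u} [CommRing R]

/-- List a finset of size `≤ m` as an `m`-tuple (padding with `0`). -/
lemma stmt19_finset_cover {m : ℕ} (Y : Finset R) (h : Y.card ≤ m) :
    ∃ c : Fin m → R, (∀ j, c j = 0 ∨ c j ∈ Y) ∧ ∀ y ∈ Y, ∃ j, c j = y := by
  classical
  refine ⟨fun j => if hj : (j : ℕ) < Y.card then (Y.equivFin.symm ⟨j, hj⟩ : R) else 0, ?_, ?_⟩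
  · intro j
    by_cases hj : (j : ℕ) < Y.card
    · right; simp only [dif_pos hj]; exact (Y.equivFin.symm ⟨j, hj⟩).2
    · left; simp only [dif_neg hj]
  · intro y hy
    set i := Y.equivFin ⟨y, hy⟩ with hi
    have him : (i : ℕ) < m := lt_of_lt_of_le i.2 h
    refine ⟨⟨i, him⟩, ?_⟩
    have : ((⟨(i : ℕ), i.2⟩ : Fin Y.card)) = i := by ext; rfl
    simp only [dif_pos (show ((⟨(i : ℕ), him⟩ : Fin m) : ℕ) < Y.card from i.2)]
    simp only [this, hi, Fin.eta, Equiv.symm_apply_apply]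

end cover


/-- Let `R` be a commutative domain of finite character and `k ≥ 2`.  If
`I` is a nonzero finitely generated ideal of `R` such that `I R_𝔪` can be generated by at
most `k` elements for every maximal ideal `𝔪` of `R`, then `I` can be generated by at most
`k` elements. -/
theorem stmt19 (R : Type u) [CommRing R] [IsDomain R]
    (hfc : ∀ r : R, r ≠ 0 → {𝔪 : MaximalSpectrum R | r ∈ 𝔪.asIdeal}.Finite)
    (k : ℕ) (hk : 2 ≤ k)
    (I : Ideal R) (hI0 : I ≠ ⊥) (hIfg : I.FG)
    (hloc : ∀ (𝔪 : Ideal R) (h𝔪 : 𝔪.IsMaximal),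
      ∃ s : Finset (Localization.AtPrime 𝔪), s.card ≤ k ∧
        Ideal.map (algebraMap R (Localization.AtPrime 𝔪)) I = Ideal.span ↑s) :
    ∃ s : Finset R, s.card ≤ k ∧ I = Ideal.span ↑s := by
  classical
  obtain ⟨a₀, ha₀I, ha₀0⟩ := Submodule.exists_mem_ne_zero_of_ne_bot hI0
  set T : Finset (MaximalSpectrum R) := (hfc a₀ ha₀0).toFinset with hT
  have hTmem : ∀ 𝔪 : MaximalSpectrum R, 𝔪 ∈ T ↔ a₀ ∈ 𝔪.asIdeal := by
    intro 𝔪; simp [hT]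
  -- choose `a ∈ I`, nonzero, with `a ∉ 𝔪 I` for every `𝔪 ∈ T`
  obtain ⟨a, haI, ha0, haT⟩ :
      ∃ a, a ∈ I ∧ a ≠ 0 ∧ ∀ 𝔪 ∈ T, a ∉ 𝔪.asIdeal * I := by
    rcases T.eq_empty_or_nonempty with hTe | ⟨𝔪₀, h𝔪₀⟩
    · exact ⟨a₀, ha₀I, ha₀0, by simp [hTe]⟩
    · choose w hwI hw using fun 𝔪 : MaximalSpectrum R => stmt19_auxA hI0 hIfg 𝔪.2
      obtain ⟨b, hbI, hb⟩ := stmt19_crt I T w (fun 𝔪 _ => hwI 𝔪)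
      have hbw : ∀ 𝔪 ∈ T, b ∉ 𝔪.asIdeal * I := by
        intro 𝔪 h𝔪 hmem
        apply hw 𝔪
        have : w 𝔪 = b - (b - w 𝔪) := by ring
        rw [this]
        exact sub_mem hmem (hb 𝔪 h𝔪)
      refine ⟨b, hbI, ?_, hbw⟩
      rintro rfl
      exact hbw 𝔪₀ h𝔪₀ (zero_mem _)
  set S : Finset (MaximalSpectrum R) := (hfc a ha0).toFinset with hS
  have hSmem : ∀ 𝔪 : MaximalSpectrum R, 𝔪 ∈ S ↔ a ∈ 𝔪.asIdeal := by
    intro 𝔪; simp [hS]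
  -- for every maximal ideal, a small completion of `a`
  have hY : ∀ 𝔪 : MaximalSpectrum R, ∃ Y : Finset R, Y.card ≤ k - 1 ∧ (∀ y ∈ Y, y ∈ I) ∧
      I ≤ Ideal.span (insert a ↑Y) ⊔ 𝔪.asIdeal * I := by
    intro 𝔪
    by_cases h𝔪T : 𝔪 ∈ T
    · obtain ⟨s, hc, hs⟩ := hloc 𝔪.asIdeal 𝔪.2
      obtain ⟨X, hXc, hXI, hX⟩ := stmt19_loc_clear 𝔪.2 s hc hs
      obtain ⟨Y, hYc, hYI, hYs⟩ := stmt19_exchange 𝔪.2 hXI hX haI (haT 𝔪 h𝔪T)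
      exact ⟨Y, by omega, hYI, hYs⟩
    · have ha₀𝔪 : a₀ ∉ 𝔪.asIdeal := fun h => h𝔪T ((hTmem 𝔪).2 h)
      refine ⟨{a₀}, by simpa using by omega, by simpa using ha₀I, ?_⟩
      intro t ht
      have htmem : t ∈ Ideal.span ({a₀} : Set R) ⊔ 𝔪.asIdeal * I :=
        stmt19_key_mem 𝔪.2 ht ha₀𝔪
          (Ideal.mem_span_singleton.2 (Dvd.intro t (mul_comm a₀ t)))
      have hmono : Ideal.span ({a₀} : Set R) ⊔ 𝔪.asIdeal * I ≤
          Ideal.span (insert a ↑({a₀} : Finset R)) ⊔ 𝔪.asIdeal * I := by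
        refine sup_le_sup_right (Ideal.span_mono ?_) _
        intro x hx
        simp only [Set.mem_singleton_iff] at hx
        simp [hx]
      exact hmono htmem
  choose Y hYc hYI hYs using hY
  choose c hc0 hccov using fun 𝔪 : MaximalSpectrum R => stmt19_finset_cover (Y 𝔪) (hYc 𝔪)
  have hcI : ∀ 𝔪 j, c 𝔪 j ∈ I := by
    intro 𝔪 j
    rcases hc0 𝔪 j with h | h
    · rw [h]; exact zero_mem _
    · exact hYI 𝔪 _ h
  -- global elements via CRT
  choose b hbI hbc using fun j : Fin (k - 1) =>
    stmt19_crt I S (fun 𝔪 => c 𝔪 j) (fun 𝔪 _ => hcI 𝔪 j)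
  set s : Finset R := insert a (Finset.image b Finset.univ) with hs
  have hscard : s.card ≤ k := by
    calc s.card ≤ (Finset.image b Finset.univ).card + 1 := Finset.card_insert_le _ _
    _ ≤ (Finset.univ : Finset (Fin (k - 1))).card + 1 := by
        exact Nat.add_le_add_right (Finset.card_image_le) 1
    _ = (k - 1) + 1 := by rw [Finset.card_univ, Fintype.card_fin]
    _ ≤ k := by omega
  set J : Ideal R := Ideal.span ↑s with hJ
  have haJ : a ∈ J := Ideal.subset_span (by simp [hs])
  have hbJ : ∀ j, b j ∈ J := fun j => Ideal.subset_span (by simp [hs])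
  have hJI : J ≤ I := by
    rw [hJ, Ideal.span_le]
    intro x hx
    simp only [hs, Finset.coe_insert, Set.mem_insert_iff, Finset.coe_image,
      Finset.mem_coe, Set.mem_image] at hx
    rcases hx with rfl | ⟨j, _, rfl⟩
    · exact haI
    · exact hbI j
  -- key local inclusion
  have hkey : ∀ 𝔪 : MaximalSpectrum R, a ∈ 𝔪.asIdeal → I ≤ J ⊔ 𝔪.asIdeal * I := by
    intro 𝔪 ha𝔪
    have h𝔪S : 𝔪 ∈ S := (hSmem 𝔪).2 ha𝔪
    have hins : Ideal.span (insert a ↑(Y 𝔪)) ≤ J ⊔ 𝔪.asIdeal * I := by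
      rw [Ideal.span_le]
      intro x hx
      rcases Set.mem_insert_iff.1 hx with rfl | hxY
      · exact Ideal.mem_sup_left haJ
      · obtain ⟨j, hj⟩ := hccov 𝔪 x hxY
        have hxeq : x = b j - (b j - c 𝔪 j) := by rw [hj]; ring
        rw [hxeq]
        exact sub_mem (Ideal.mem_sup_left (hbJ j))
          (Ideal.mem_sup_right (hbc j 𝔪 h𝔪S))
    exact (hYs 𝔪).trans (sup_le hins le_sup_right)
  -- local-global
  have hJeq : I = J := by
    apply Ideal.eq_of_localization_maximal
    intro P hP
    haveI : P.IsPrime := hP.isPrime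
    set φ := algebraMap R (Localization.AtPrime P) with hφ
    by_cases haP : a ∈ P
    · have h1 : I ≤ J ⊔ P * I := hkey ⟨P, hP⟩ haP
      have hmap : Ideal.map φ I ≤ Ideal.map φ J ⊔ Ideal.map φ P • Ideal.map φ I := by
        rw [Ideal.smul_eq_mul, ← Ideal.map_mul, ← Ideal.map_sup]
        exact Ideal.map_mono h1
      have hfg : (Ideal.map φ I).FG := Ideal.FG.map hIfg φ
      have hjac : Ideal.map φ P ≤ Ideal.jacobson ⊥ := by
        rw [IsLocalRing.jacobson_eq_maximalIdeal ⊥ bot_ne_top]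
        exact le_of_eq (Localization.AtPrime.map_eq_maximalIdeal)
      have hle := Submodule.le_of_le_smul_of_le_jacobson_bot hfg hjac hmap
      exact le_antisymm hle (Ideal.map_mono hJI)
    · have hua : IsUnit (φ a) :=
        IsLocalization.map_units (Localization.AtPrime P) (⟨a, haP⟩ : P.primeCompl)
      have hItop : Ideal.map φ I = ⊤ :=
        Ideal.eq_top_of_isUnit_mem _ (Ideal.mem_map_of_mem φ haI) hua
      have hJtop : Ideal.map φ J = ⊤ :=
        Ideal.eq_top_of_isUnit_mem _ (Ideal.mem_map_of_mem φ haJ) hua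
      rw [hItop, hJtop]
  exact ⟨s, hscard, hJeq⟩
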